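/- With σ the logistic function and γ ∈ [0,1), the functions d(θ) = ((1), (1-γ)σ(θ₁)) and V(θ) = (γσ(θ₁)σ(θ₂), σ(θ₂)) on ℝ² satisfy: the 2×2 matrix M(θ) with entries M_{ij} = ∑_{k=1}^{2} (∂d_k/∂θᵢ)(∂V_k/∂θⱼ) has M₁₂ = (1-γ)·σ'(θ₁)·σ'(θ₂) and M₂₁ = 0, so M is asymmetric at every θ when γ < 1. -/

import Mathlib

noncomputable def logistic (x : ℝ) : ℝ := 1 / (1 + Real.exp (-x))

noncomputable def logisticDeriv (x : ℝ) : ℝ := logistic x * (1 - logistic x)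

lemma one_add_exp_pos (x : ℝ) : 0 < 1 + Real.exp (-x) := by positivity

lemma logistic_hasDeriv (x : ℝ) : HasDerivAt logistic (logisticDeriv x) x := by
  have hne : 1 + Real.exp (-x) ≠ 0 := (one_add_exp_pos x).ne'
  have h1 : HasDerivAt (fun y : ℝ => 1 + Real.exp (-y)) (-Real.exp (-x)) x := by
    have := (Real.hasDerivAt_exp (-x)).comp x (hasDerivAt_neg x)
    simpa using (this.const_add 1)
  have h2 : HasDerivAt (fun y => (1 + Real.exp (-y))⁻¹) _ x := h1.inv hne
  have hlog : logistic = fun y => (1 + Real.exp (-y))⁻¹ := by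
    funext y; simp [logistic, one_div]
  rw [hlog]
  convert h2 using 1
  have : logisticDeriv x = Real.exp (-x) / (1 + Real.exp (-x)) ^ 2 := by
    unfold logisticDeriv logistic
    field_simp
    ring
  rw [this]; ring

lemma deriv_logistic (x : ℝ) : deriv logistic x = logisticDeriv x :=
  (logistic_hasDeriv x).deriv

lemma logistic_pos (x : ℝ) : 0 < logistic x := by
  unfold logistic; positivity

lemma logistic_lt_one (x : ℝ) : logistic x < 1 := by
  rw [logistic, div_lt_one (one_add_exp_pos x)]
  linarith [Real.exp_pos (-x)]

/-- For `d(θ) = (1, (1-γ)σ(θ₁))` and `V(θ) = (γσ(θ₁)σ(θ₂), σ(θ₂))`, the matrix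
`M_{ij} = ∑_k (∂d_k/∂θᵢ)(∂V_k/∂θⱼ)` has `M₁₂ = (1-γ)σ'(θ₁)σ'(θ₂)`, `M₂₁ = 0`,
hence `M` is asymmetric (at every `θ`) when `γ < 1`. -/
theorem asymmetric_term_nonzero (γ : ℝ) (hγ0 : 0 ≤ γ) (hγ1 : γ < 1) (θ₁ θ₂ : ℝ) :
    (deriv (fun _ => (1 : ℝ)) θ₁) * (deriv (fun y => γ * logistic θ₁ * logistic y) θ₂)
      + (deriv (fun x => (1 - γ) * logistic x) θ₁) * (deriv (fun y => logistic y) θ₂)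
      = (1 - γ) * logisticDeriv θ₁ * logisticDeriv θ₂ ∧
    (deriv (fun _ => (1 : ℝ)) θ₂) * (deriv (fun x => γ * logistic x * logistic θ₂) θ₁)
      + (deriv (fun _ => (1 - γ) * logistic θ₁) θ₂) * (deriv (fun _ => logistic θ₂) θ₁)
      = 0 ∧
    (1 - γ) * logisticDeriv θ₁ * logisticDeriv θ₂ ≠ 0 := by
  have hd1 : ∀ c x : ℝ, deriv (fun y => c * logistic y) x = c * logisticDeriv x := by
    intro c x
    rw [deriv_const_mul _ (logistic_hasDeriv x).differentiableAt, deriv_logistic]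
  refine ⟨?_, ?_, ?_⟩
  · have h1 : deriv (fun y => logistic y) θ₂ = logisticDeriv θ₂ := deriv_logistic θ₂
    rw [deriv_const, hd1, hd1, h1]
    ring
  · rw [deriv_const, deriv_const, deriv_const]
    ring
  · have h1 := logistic_pos θ₁
    have h2 := logistic_lt_one θ₁
    have h3 := logistic_pos θ₂
    have h4 := logistic_lt_one θ₂
    have : 0 < (1 - γ) * logisticDeriv θ₁ * logisticDeriv θ₂ := by
      unfold logisticDeriv
      have h5 : 0 < 1 - γ := by linarith
      have h6 : 0 < 1 - logistic θ₁ := by linarith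
      have h7 : 0 < 1 - logistic θ₂ := by linarith
      positivity
    exact this.ne'
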